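/- Fix positive coprime integers a, b and a real constant c. For x > 0 define y(x) = L^{−1}(c/b − (a/b)·L(x)) and z(x) = x^a · y(x)^b, where L is the pseudolog function. Then z(2^b · x) = z(x) for all x > 0; i.e., z is periodic in L(x) with period b. -/

import Mathlib

noncomputable def pseudolog (x : ℝ) : ℝ :=
  (⌊Real.logb 2 x⌋ : ℝ) + ((2 : ℝ) ^ (-⌊Real.logb 2 x⌋ : ℤ) * x - 1)

noncomputable def pseudologInv (X : ℝ) : ℝ :=
  (2 : ℝ) ^ (⌊X⌋ : ℤ) * (1 + X - ⌊X⌋)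

lemma pseudolog_shift (b : ℕ) (x : ℝ) (hx : 0 < x) :
    pseudolog ((2 : ℝ) ^ b * x) = pseudolog x + b := by
  have hlog : Real.logb 2 ((2 : ℝ) ^ b * x) = Real.logb 2 x + b := by
    have h22 : Real.logb 2 2 = 1 := by simp
    rw [Real.logb_mul (by positivity) (ne_of_gt hx), Real.logb_pow, h22]
    ring
  have hfloor : ⌊Real.logb 2 ((2 : ℝ) ^ b * x)⌋ = ⌊Real.logb 2 x⌋ + b := by
    rw [hlog, Int.floor_add_natCast]
  unfold pseudolog
  rw [hfloor]
  push_cast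
  have : (2 : ℝ) ^ (-(⌊Real.logb 2 x⌋ + (b : ℤ))) * ((2:ℝ) ^ b * x)
      = (2 : ℝ) ^ (-⌊Real.logb 2 x⌋) * x := by
    rw [neg_add, zpow_add₀ (by norm_num : (2:ℝ) ≠ 0)]
    have h2 : (2 : ℝ) ^ (-(b : ℤ)) * (2 : ℝ) ^ b = 1 := by
      rw [← zpow_natCast (2:ℝ) b, ← zpow_add₀ (by norm_num : (2:ℝ) ≠ 0)]
      simp
    calc (2:ℝ) ^ (-⌊Real.logb 2 x⌋) * (2:ℝ) ^ (-(b:ℤ)) * ((2:ℝ) ^ b * x)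
        = (2:ℝ) ^ (-⌊Real.logb 2 x⌋) * ((2:ℝ) ^ (-(b:ℤ)) * (2:ℝ) ^ b) * x := by ring
      _ = _ := by rw [h2]; ring
  rw [this]
  ring

lemma pseudologInv_shift (n : ℕ) (X : ℝ) :
    pseudologInv (X - n) = (2 : ℝ) ^ (-(n : ℤ)) * pseudologInv X := by
  unfold pseudologInv
  have hfloor : ⌊X - (n : ℝ)⌋ = ⌊X⌋ - n := by
    rw [Int.floor_sub_natCast]
  rw [hfloor, sub_eq_add_neg (⌊X⌋) (n:ℤ), zpow_add₀ (by norm_num : (2:ℝ) ≠ 0)]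
  push_cast
  ring

theorem z_periodic (a b : ℕ) (ha : 0 < a) (hb : 0 < b) (hab : Nat.Coprime a b)
    (c : ℝ) :
    let y : ℝ → ℝ := fun x => pseudologInv (c / b - (a / b) * pseudolog x)
    let z : ℝ → ℝ := fun x => x ^ a * (y x) ^ b
    ∀ x : ℝ, 0 < x → z ((2 : ℝ) ^ b * x) = z x := by
  intro y z x hx
  have hbR : (b : ℝ) ≠ 0 := Nat.cast_ne_zero.mpr hb.ne'
  have harg : c / b - (a / b) * pseudolog ((2:ℝ) ^ b * x)
      = (c / b - (a / b) * pseudolog x) - a := by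
    rw [pseudolog_shift b x hx]
    field_simp
    ring
  have hy : y ((2:ℝ) ^ b * x) = (2 : ℝ) ^ (-(a : ℤ)) * y x := by
    show pseudologInv _ = _
    rw [harg, pseudologInv_shift a]
  show ((2:ℝ) ^ b * x) ^ a * (y ((2:ℝ)^b * x)) ^ b = x ^ a * (y x) ^ b
  rw [hy, mul_pow, mul_pow]
  have key : ((2:ℝ) ^ b) ^ a * ((2:ℝ) ^ (-(a:ℤ))) ^ b = 1 := by
    rw [← zpow_natCast ((2:ℝ)^b) a, ← zpow_natCast ((2:ℝ)^(-(a:ℤ))) b,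
      ← zpow_natCast (2:ℝ) b, ← zpow_mul, ← zpow_mul,
      ← zpow_add₀ (by norm_num : (2:ℝ) ≠ 0)]
    have : (b : ℤ) * a + (-(a:ℤ)) * b = 0 := by ring
    rw [this, zpow_zero]
  calc ((2:ℝ)^b)^a * x^a * (((2:ℝ)^(-(a:ℤ)))^b * (y x)^b)
      = (((2:ℝ)^b)^a * ((2:ℝ)^(-(a:ℤ)))^b) * (x^a * (y x)^b) := by ring
    _ = x ^ a * (y x) ^ b := by rw [key]; ring
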